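/- For a finite nonempty set A of integers, |3A| ≥ (3/2)|2A| − 1/2, i.e., 2|3A| ≥ 3|2A| − 1, where kA denotes the k-fold sumset A + ⋯ + A. -/
import Mathlib

open Pointwise

theorem three_fold_vs_two_fold (A : Finset ℤ) (hA : A.Nonempty) :
    3 * (A + A).card - 1 ≤ 2 * (A + A + A).card := by
  classical
  set a := A.min' hA with ha
  set b := A.max' hA with hb
  have haA : a ∈ A := A.min'_mem hA
  have hbA : b ∈ A := A.max'_mem hA
  have hab : a ≤ b := A.min'_le b hbA
  obtain ⟨S, hS⟩ : ∃ S : Finset ℤ, S = A + A := ⟨_, rfl⟩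
  rw [show A + A + A = S + A by rw [hS], show A + A = S by rw [hS]]
  set S₁ := S.filter (fun s => s < a + b) with hS1
  set S₂ := S.filter (fun s => a + b < s) with hS2
  have habS : a + b ∈ S := hS ▸ Finset.add_mem_add haA hbA
  have hlow : ∀ s ∈ S, 2 * a ≤ s := by
    intro s hs
    rw [hS, Finset.mem_add] at hs
    obtain ⟨x, hx, y, hy, rfl⟩ := hs
    have := A.min'_le x hx
    have := A.min'_le y hy
    omega
  have hhigh : ∀ s ∈ S, s ≤ 2 * b := by
    intro s hs
    rw [hS, Finset.mem_add] at hs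
    obtain ⟨x, hx, y, hy, rfl⟩ := hs
    have := A.le_max' x hx
    have := A.le_max' y hy
    omega
  -- card split of S
  have hsplit : S₁.card + S₂.card + 1 = S.card := by
    have hnotmem : a + b ∉ S₂ := by simp [hS2]
    have hunion : S₁ ∪ insert (a + b) S₂ = S := by
      ext x
      simp only [Finset.mem_union, Finset.mem_insert, hS1, hS2, Finset.mem_filter]
      constructor
      · rintro (⟨hx, _⟩ | rfl | ⟨hx, _⟩)
        · exact hx
        · exact habS
        · exact hx
      · intro hx
        rcases lt_trichotomy x (a + b) with h | h | h
        · exact Or.inl ⟨hx, h⟩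
        · exact Or.inr (Or.inl h)
        · exact Or.inr (Or.inr ⟨hx, h⟩)
    have hd : Disjoint S₁ (insert (a + b) S₂) := by
      rw [Finset.disjoint_left]
      intro x hx hx'
      simp only [hS1, Finset.mem_filter] at hx
      simp only [Finset.mem_insert, hS2, Finset.mem_filter] at hx'
      rcases hx' with rfl | ⟨_, h⟩
      · exact absurd hx.2 (lt_irrefl _)
      · omega
    have hc := Finset.card_union_of_disjoint hd
    rw [hunion, Finset.card_insert_of_notMem hnotmem] at hc
    omega
  have inj1 : Function.Injective (fun s : ℤ => s + a) := add_left_injective a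
  have inj2 : Function.Injective (fun s : ℤ => s + b) := add_left_injective b
  -- first bound : |S₁| + |S| ≤ |3A|
  have key1 : S₁.card + S.card ≤ (S + A).card := by
    have hdisj : Disjoint (S₁.image (fun s => s + a)) (S.image (fun s => s + b)) := by
      rw [Finset.disjoint_left]
      rintro x hx hy
      rw [Finset.mem_image] at hx hy
      obtain ⟨s, hs, rfl⟩ := hx
      obtain ⟨s', hs', heq⟩ := hy
      rw [hS1, Finset.mem_filter] at hs
      have := hlow s' hs'
      omega
    have hsub : S₁.image (fun s => s + a) ∪ S.image (fun s => s + b) ⊆ S + A := by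
      intro x hx
      rw [Finset.mem_union, Finset.mem_image, Finset.mem_image] at hx
      rcases hx with ⟨s, hs, rfl⟩ | ⟨s, hs, rfl⟩
      · exact Finset.add_mem_add (Finset.mem_of_mem_filter s hs) haA
      · exact Finset.add_mem_add hs hbA
    calc S₁.card + S.card
        = (S₁.image (fun s => s + a)).card + (S.image (fun s => s + b)).card := by
          rw [Finset.card_image_of_injective _ inj1, Finset.card_image_of_injective _ inj2]
      _ = (S₁.image (fun s => s + a) ∪ S.image (fun s => s + b)).card :=
          (Finset.card_union_of_disjoint hdisj).symm
      _ ≤ (S + A).card := Finset.card_le_card hsub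
  -- second bound : |S| + |S₂| ≤ |3A|
  have key2 : S.card + S₂.card ≤ (S + A).card := by
    have hdisj : Disjoint (S.image (fun s => s + a)) (S₂.image (fun s => s + b)) := by
      rw [Finset.disjoint_left]
      rintro x hx hy
      rw [Finset.mem_image] at hx hy
      obtain ⟨s, hs, rfl⟩ := hx
      obtain ⟨s', hs', heq⟩ := hy
      rw [hS2, Finset.mem_filter] at hs'
      have := hhigh s hs
      omega
    have hsub : S.image (fun s => s + a) ∪ S₂.image (fun s => s + b) ⊆ S + A := by
      intro x hx
      rw [Finset.mem_union, Finset.mem_image, Finset.mem_image] at hx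
      rcases hx with ⟨s, hs, rfl⟩ | ⟨s, hs, rfl⟩
      · exact Finset.add_mem_add hs haA
      · exact Finset.add_mem_add (Finset.mem_of_mem_filter s hs) hbA
    calc S.card + S₂.card
        = (S.image (fun s => s + a)).card + (S₂.image (fun s => s + b)).card := by
          rw [Finset.card_image_of_injective _ inj1, Finset.card_image_of_injective _ inj2]
      _ = (S.image (fun s => s + a) ∪ S₂.image (fun s => s + b)).card :=
          (Finset.card_union_of_disjoint hdisj).symm
      _ ≤ (S + A).card := Finset.card_le_card hsub
  omega
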